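/- Let G, R, K, W be n×n complex matrices with W invertible, W - GWR = K⁻¹, Ĝ := WRW⁻¹, R̂ := W⁻¹GW. Suppose u ≠ 0, v satisfy Gu = ξu, vᵀu = 1, Q = uvᵀ, and ξ·vᵀĜu ≠ 1. Then W_r := W - ξQWR is invertible. -/

import Mathlib

open Matrix

/-- If `W` is invertible, `W - GWR = K⁻¹`, `Ĝ = WRW⁻¹`, `Gu = ξu`, `vᵀu = 1`,
`Q = uvᵀ` and `ξ·vᵀĜu ≠ 1`, then `W_r = W - ξQWR` is invertible. -/
theorem Wr_invertible {n : ℕ} (G R K W : Matrix (Fin n) (Fin n) ℂ)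
    (hK : IsUnit K) (hW : IsUnit W) (hStein : W - G * W * R = K⁻¹)
    (ξ : ℂ) (u v : Fin n → ℂ) (hu : u ≠ 0) (hGu : G.mulVec u = ξ • u)
    (huv : v ⬝ᵥ u = 1)
    (hcond : ξ * (v ⬝ᵥ (W * R * W⁻¹).mulVec u) ≠ 1) :
    IsUnit (W - ξ • (vecMulVec u v * W * R)) := by
  have hWdet : IsUnit W.det := (Matrix.isUnit_iff_isUnit_det W).mp hW
  set M := W * R * W⁻¹ with hM
  have key : W - ξ • (vecMulVec u v * W * R)
      = (1 + replicateCol Unit (-(ξ • u)) * replicateRow Unit (v ᵥ* M)) * W := by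
    have hWW : W⁻¹ * W = 1 := nonsing_inv_mul W hWdet
    rw [add_mul, one_mul, ← vecMulVec_eq Unit]
    have : vecMulVec (-(ξ • u)) (v ᵥ* M) * W
        = -(ξ • (vecMulVec u v * W * R)) := by
      have h1 : vecMulVec (-(ξ • u)) (v ᵥ* M) = -(ξ • (vecMulVec u v * M)) := by
        ext i j
        simp [vecMulVec_apply, vecMul, dotProduct, Matrix.mul_apply,
          Finset.mul_sum, Finset.sum_mul, mul_assoc, mul_comm, mul_left_comm]
      rw [h1, hM]
      rw [neg_mul, ← smul_mul_assoc]
      congr 1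
      rw [smul_mul_assoc, smul_mul_assoc]
      congr 1
      calc vecMulVec u v * (W * R * W⁻¹) * W
          = vecMulVec u v * (W * R) * (W⁻¹ * W) := by
            simp only [mul_assoc]
        _ = vecMulVec u v * W * R := by rw [hWW, mul_one, mul_assoc]
    rw [this, sub_eq_add_neg]
  rw [key]
  refine (Matrix.isUnit_iff_isUnit_det _).mpr ?_
  rw [det_mul, det_one_add_replicateCol_mul_replicateRow]
  have : (v ᵥ* M) ⬝ᵥ (-(ξ • u)) = -(ξ * (v ⬝ᵥ M.mulVec u)) := by
    rw [dotProduct_neg, dotProduct_smul, ← dotProduct_mulVec, smul_eq_mul]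
  rw [this]
  have h2 : (1 : ℂ) + -(ξ * (v ⬝ᵥ M.mulVec u)) ≠ 0 := by
    rw [← sub_eq_add_neg]
    exact sub_ne_zero.mpr (Ne.symm hcond)
  exact (isUnit_iff_ne_zero.mpr h2).mul hWdet
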